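/- Let X be a compact Hausdorff space, μ a regular Borel measure on X, and φ_μ the functional on C(X) given by integration against μ. Then the absolute value |φ_μ| (from the polar decomposition of φ_μ in C(X)**) is the functional given by integration against the total variation measure |μ|. -/

import Mathlib

open ComplexOrder Filter Topology

section AbsValue

variable (M : Type*) [NormedRing M] [StarRing M] [NormedAlgebra ℂ M]

/-- `absΦ` is the absolute value (from the polar decomposition) of the weak-*
continuous functional `Φ` on the von Neumann algebra `M`, with partial isometry `v`:
`Φ = absΦ(· v)`, `absΦ` is positive, and `M(1 - v*v) = {ξ | absΦ(ξ*ξ) = 0}`. -/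
def IsAbsValue (Φ absΦ : M →L[ℂ] ℂ) (v : M) : Prop :=
  v * star v * v = v ∧
  (∀ ξ : M, 0 ≤ absΦ (star ξ * ξ)) ∧
  (∀ ξ : M, Φ ξ = absΦ (ξ * v)) ∧
  (∀ ξ : M, absΦ (star ξ * ξ) = 0 ↔ ξ * (star v * v) = 0)

end AbsValue

section Setup

variable (T M : Type*) [NormedRing T] [StarRing T] [NormedAlgebra ℂ T]
  [NormedRing M] [StarRing M] [NormedAlgebra ℂ M]

/-- Abstract model of the canonical inclusion `ι` of a unital C*-algebra `T` into its
bidual von Neumann algebra `M = T**`, together with the weak-* continuous extension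
`hat φ` of each bounded functional `φ` on `T`, and the polar decomposition data
(`absVal φ = |φ|`, with partial isometry `pIso φ`). -/
structure BidualSetup where
  ι : T →L[ℂ] M
  ι_mul : ∀ s t : T, ι (s * t) = ι s * ι t
  ι_star : ∀ t : T, ι (star t) = star (ι t)
  ι_one : ι 1 = 1
  ι_isom : ∀ t : T, ‖ι t‖ = ‖t‖
  hat : (T →L[ℂ] ℂ) →ₗ[ℂ] (M →L[ℂ] ℂ)
  hat_ext : ∀ (φ : T →L[ℂ] ℂ) (t : T), hat φ (ι t) = φ t
  hat_norm : ∀ φ : T →L[ℂ] ℂ, ‖hat φ‖ = ‖φ‖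
  absVal : (T →L[ℂ] ℂ) → (M →L[ℂ] ℂ)
  pIso : (T →L[ℂ] ℂ) → M
  polar : ∀ φ : T →L[ℂ] ℂ, IsAbsValue M (hat φ) (absVal φ) (pIso φ)

end Setup

section AC

variable {T M : Type*} [NormedRing T] [StarRing T] [NormedAlgebra ℂ T]
  [NormedRing M] [StarRing M] [NormedAlgebra ℂ M]

/-- `φ` is absolutely continuous with respect to `ψ`:
`|ψ|(ξ*ξ) = 0` implies `|φ|(ξ*ξ) = 0` for all `ξ ∈ T**`. -/
def AbsCont (B : BidualSetup T M) (φ ψ : T →L[ℂ] ℂ) : Prop :=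
  ∀ ξ : M, B.absVal ψ (star ξ * ξ) = 0 → B.absVal φ (star ξ * ξ) = 0

/-- The support projection `s_φ = v_φ* v_φ` of a functional `φ` on `T`. -/
def suppProj (B : BidualSetup T M) (φ : T →L[ℂ] ℂ) : M :=
  star (B.pIso φ) * B.pIso φ

/-- A state on a unital C*-algebra: a positive unital functional. -/
def IsStateOn (δ : T →L[ℂ] ℂ) : Prop :=
  (∀ t : T, 0 ≤ δ (star t * t)) ∧ δ 1 = 1

end AC

section AuxLemmas

open MeasureTheory ComplexOrder

section CSaux
variable {M : Type*} [NormedRing M] [StarRing M] [NormedAlgebra ℂ M] [StarModule ℂ M]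

set_option linter.unusedSectionVars false

lemma pos_parts {ω : M →L[ℂ] ℂ} (hpos : ∀ ξ : M, 0 ≤ ω (star ξ * ξ)) (ξ : M) :
    (ω (star ξ * ξ)).im = 0 ∧ 0 ≤ (ω (star ξ * ξ)).re := by
  have := hpos ξ
  rw [Complex.le_def] at this
  exact ⟨this.2.symm, by simpa using this.1⟩

lemma conj_symm {ω : M →L[ℂ] ℂ} (hpos : ∀ ξ : M, 0 ≤ ω (star ξ * ξ)) (a b : M) :
    ω (star b * a) = starRingEnd ℂ (ω (star a * b)) := by
  have key : ∀ x y : M, ((ω (star x * y)) + ω (star y * x)).im = 0 := by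
    intro x y
    have h1 := (pos_parts hpos (x + y)).1
    have h2 := (pos_parts hpos x).1
    have h3 := (pos_parts hpos y).1
    have : star (x + y) * (x + y) = star x * x + (star x * y + star y * x) + star y * y := by
      rw [star_add]; noncomm_ring
    rw [this] at h1
    simp only [map_add, Complex.add_im] at h1 ⊢
    linarith
  have h1 := key a b
  have h2 := key a ((Complex.I : ℂ) • b)
  have e1 : star a * ((Complex.I : ℂ) • b) = (Complex.I : ℂ) • (star a * b) := by
    rw [mul_smul_comm]
  have e2 : star ((Complex.I : ℂ) • b) * a = (-(Complex.I : ℂ)) • (star b * a) := by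
    rw [star_smul, smul_mul_assoc]
    congr 1
    simp [Complex.conj_I]
  rw [e1, e2, _root_.map_smul, _root_.map_smul] at h2
  simp only [Complex.add_im, Complex.smul_im, Complex.smul_re, smul_eq_mul] at h2 h1 ⊢
  rw [Complex.ext_iff]
  constructor
  · simp only [Complex.conj_re]
    have := h2
    simp only [Complex.mul_im, Complex.I_re, Complex.I_im, Complex.neg_re, Complex.neg_im] at this
    nlinarith [this]
  · simp only [Complex.conj_im]
    linarith

lemma cs_ineq {ω : M →L[ℂ] ℂ} (hpos : ∀ ξ : M, 0 ≤ ω (star ξ * ξ)) (a b : M) :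
    ‖ω (star a * b)‖ ^ 2 ≤ (ω (star a * a)).re * (ω (star b * b)).re := by
  set c : ℂ := ω (star a * b) with hc
  have hnc : ‖c‖ ^ 2 = c.re ^ 2 + c.im ^ 2 := by
    rw [Complex.sq_norm, Complex.normSq_apply]; ring
  have expand : ∀ s : ℝ, 0 ≤ (ω (star a * a)).re - 2 * s * ‖c‖^2
      + s^2 * ‖c‖^2 * (ω (star b * b)).re := by
    intro s
    set t : ℂ := -(s : ℂ) * starRingEnd ℂ c with ht
    have h := (pos_parts hpos (a + t • b)).2
    have hexp : star (a + t • b) * (a + t • b)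
        = star a * a + t • (star a * b) + starRingEnd ℂ t • (star b * a)
          + (t * starRingEnd ℂ t) • (star b * b) := by
      rw [star_add, star_smul]
      simp only [add_mul, mul_add, smul_mul_assoc, mul_smul_comm, smul_smul, smul_add,
        Complex.star_def]
      abel
    rw [hexp] at h
    simp only [map_add, _root_.map_smul, smul_eq_mul] at h
    have hba : ω (star b * a) = starRingEnd ℂ c := conj_symm hpos a b
    rw [hba] at h
    have him_aa := (pos_parts hpos a).1
    have him_bb := (pos_parts hpos b).1
    rw [hnc]
    simp only [Complex.add_re, Complex.mul_re, Complex.mul_im,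
      Complex.conj_re, Complex.conj_im, Complex.neg_re, Complex.neg_im, Complex.ofReal_re,
      Complex.ofReal_im, ht] at h
    ring_nf at h ⊢
    nlinarith [h, him_aa, him_bb]
  have hA := (pos_parts hpos a).2
  have hB := (pos_parts hpos b).2
  set A := (ω (star a * a)).re with hAdef
  set Bv := (ω (star b * b)).re with hBdef
  set r := ‖c‖ ^ 2 with hrdef
  have hr : 0 ≤ r := by positivity
  rcases eq_or_lt_of_le hB with hB0 | hBpos
  · have hc0 : r = 0 := by
      by_contra hne
      have hcpos : 0 < r := lt_of_le_of_ne hr (Ne.symm hne)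
      have h3 := expand ((A + 1) / (2 * r))
      rw [← hB0] at h3
      have : A + 1 ≤ A := by
        have e : 2 * ((A + 1) / (2 * r)) * r = A + 1 := by field_simp
        nlinarith [h3, e]
      linarith
    rw [hc0, ← hB0]
    nlinarith [hA]
  · have h3 := expand Bv⁻¹
    have hinv : Bv * Bv⁻¹ = 1 := mul_inv_cancel₀ (ne_of_gt hBpos)
    have e1 : Bv * (A - 2 * Bv⁻¹ * r + Bv⁻¹ ^ 2 * r * Bv) = A * Bv - r := by
      field_simp
      ring
    have h4 := mul_nonneg hBpos.le h3
    rw [e1] at h4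
    linarith
end CSaux

section CMaux
variable {X : Type*} [TopologicalSpace X]

/-- complexification of a real continuous function -/
def cm (f : C(X, ℝ)) : C(X, ℂ) :=
  ⟨fun x => (f x : ℂ), Complex.continuous_ofReal.comp f.continuous⟩

@[simp] lemma cm_apply (f : C(X, ℝ)) (x : X) : cm f x = (f x : ℂ) := rfl

lemma cm_star (f : C(X, ℝ)) : star (cm f) = cm f := by
  ext x
  simp [Complex.conj_ofReal]

lemma cm_add (f g : C(X, ℝ)) : cm (f + g) = cm f + cm g := by
  ext x; push_cast; simp

lemma cm_one : cm (1 : C(X, ℝ)) = 1 := by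
  ext x; simp

lemma cm_one_sub (u : C(X, ℝ)) : cm ((1 : C(X, ℝ)) - u) = 1 - cm u := by
  ext x
  simp [cm]

/-- pointwise square root -/
noncomputable def sq' (f : C(X, ℝ)) : C(X, ℝ) :=
  ⟨fun x => Real.sqrt (f x), Real.continuous_sqrt.comp f.continuous⟩

lemma cm_sq_mul_self (f : C(X, ℝ)) (hf : ∀ x, 0 ≤ f x) :
    cm (sq' f) * cm (sq' f) = cm f := by
  ext x
  simp only [ContinuousMap.mul_apply, cm_apply, sq']
  rw [← Complex.ofReal_mul]
  norm_cast
  exact Real.mul_self_sqrt (hf x)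

lemma trunc_bound (z w : ℂ) (hw : ‖w‖ ≤ 1) :
    ‖z / ((max 1 ‖z‖ : ℝ) : ℂ) - w‖ ≤ 2 * ‖z - w‖ := by
  rcases le_total ‖z‖ 1 with h | h
  · rw [max_eq_left h]
    simp only [Complex.ofReal_one, div_one]
    nlinarith [norm_nonneg (z - w)]
  · rw [max_eq_right h]
    have hz0 : (0:ℝ) < ‖z‖ := lt_of_lt_of_le one_pos h
    have hzc : ((‖z‖ : ℝ) : ℂ) ≠ 0 := by
      simp only [ne_eq, Complex.ofReal_eq_zero]
      exact ne_of_gt hz0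
    have step1 : ‖z / ((‖z‖ : ℝ) : ℂ) - z‖ = ‖z‖ - 1 := by
      have e : z / ((‖z‖ : ℝ) : ℂ) - z = z * (1 / ((‖z‖ : ℝ) : ℂ) - 1) := by ring
      have e2 : (1 / ((‖z‖ : ℝ) : ℂ) - 1) = ((1 / ‖z‖ - 1 : ℝ) : ℂ) := by push_cast; ring
      rw [e, e2, norm_mul, Complex.norm_real, Real.norm_eq_abs, abs_of_nonpos (by
        have : 1 / ‖z‖ ≤ 1 := by rw [div_le_one hz0]; exact h
        linarith)]
      rw [neg_sub, mul_sub, mul_one, mul_one_div, div_self (ne_of_gt hz0)]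
    have tri : ‖z / ((‖z‖ : ℝ) : ℂ) - w‖ ≤ ‖z / ((‖z‖ : ℝ) : ℂ) - z‖ + ‖z - w‖ := by
      have := norm_add_le (z / ((‖z‖ : ℝ) : ℂ) - z) (z - w)
      simpa using this
    have tri2 : ‖z‖ - ‖w‖ ≤ ‖z - w‖ := norm_sub_norm_le z w
    rw [step1] at tri
    linarith

lemma cont_integrable {Y : Type*} [MeasurableSpace X] [OpensMeasurableSpace X] [CompactSpace X]
    [NormedAddCommGroup Y] [SecondCountableTopology Y] (k : C(X, Y)) (ν : Measure X) [IsFiniteMeasure ν] :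
    Integrable k ν := by
  refine Integrable.mono' (integrable_const ‖k‖) k.continuous.aestronglyMeasurable ?_
  exact Filter.Eventually.of_forall fun x => k.norm_coe_le_norm x

end CMaux

section Approx

lemma approx_conj {X : Type*} [TopologicalSpace X] [CompactSpace X] [T2Space X]
    [MeasurableSpace X] [BorelSpace X]
    (ν : Measure X) [IsFiniteMeasure ν] [ν.Regular]
    (g : X → ℂ) (hg : AEStronglyMeasurable g ν) (hg1 : ∀ᵐ x ∂ν, ‖g x‖ = 1)
    {ε : ℝ} (hε : 0 < ε) :
    ∃ h : C(X, ℂ), (∀ x, ‖h x‖ ≤ 1) ∧ ∫ x, ‖h x - (starRingEnd ℂ) (g x)‖ ∂ν ≤ ε := by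
  have hgc : AEStronglyMeasurable (fun x => (starRingEnd ℂ) (g x)) ν :=
    Complex.continuous_conj.comp_aestronglyMeasurable hg
  have hint : Integrable (fun x => (starRingEnd ℂ) (g x)) ν := by
    refine Integrable.mono' (integrable_const 1) hgc ?_
    filter_upwards [hg1] with x hx
    simp [hx]
  obtain ⟨h₀, hh₀, hh₀i⟩ := hint.exists_boundedContinuous_integral_sub_le
    (by positivity : (0:ℝ) < ε/2)
  have hcont : Continuous fun x => h₀ x / ((max 1 ‖h₀ x‖ : ℝ) : ℂ) := by
    apply h₀.continuous.div
    · exact Complex.continuous_ofReal.comp (continuous_const.max h₀.continuous.norm)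
    · intro x
      simp only [ne_eq, Complex.ofReal_eq_zero]
      positivity
  set h : C(X, ℂ) := ⟨fun x => h₀ x / ((max 1 ‖h₀ x‖ : ℝ) : ℂ), hcont⟩ with hh
  have hmaxpos : ∀ x, (0:ℝ) < max 1 ‖h₀ x‖ := fun x => lt_of_lt_of_le one_pos (le_max_left _ _)
  have hb : ∀ x, ‖h x‖ ≤ 1 := by
    intro x
    rw [show h x = h₀ x / ((max 1 ‖h₀ x‖ : ℝ) : ℂ) from rfl, norm_div, Complex.norm_real,
      Real.norm_eq_abs, abs_of_pos (hmaxpos x), div_le_one (hmaxpos x)]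
    exact le_max_right _ _
  refine ⟨h, hb, ?_⟩
  have hptwise : ∀ᵐ x ∂ν, ‖h x - (starRingEnd ℂ) (g x)‖ ≤ 2 * ‖h₀ x - (starRingEnd ℂ) (g x)‖ := by
    filter_upwards [hg1] with x hx
    have hw : ‖(starRingEnd ℂ) (g x)‖ ≤ 1 := by simp [hx]
    exact trunc_bound (h₀ x) _ hw
  have int1 : Integrable (fun x => ‖h x - (starRingEnd ℂ) (g x)‖) ν := by
    apply Integrable.norm
    exact ((cont_integrable h ν)).sub hint
  have int2 : Integrable (fun x => 2 * ‖h₀ x - (starRingEnd ℂ) (g x)‖) ν := by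
    apply Integrable.const_mul
    exact ((cont_integrable h₀.toContinuousMap ν).sub hint).norm
  calc ∫ x, ‖h x - (starRingEnd ℂ) (g x)‖ ∂ν
      ≤ ∫ x, 2 * ‖h₀ x - (starRingEnd ℂ) (g x)‖ ∂ν := integral_mono_ae int1 int2 hptwise
    _ = 2 * ∫ x, ‖(starRingEnd ℂ) (g x) - h₀ x‖ ∂ν := by
        rw [integral_const_mul]
        congr 1
        apply integral_congr_ae
        filter_upwards with x
        rw [norm_sub_rev]
    _ ≤ 2 * (ε/2) := by linarith [hh₀]
    _ = ε := by ring

end Approx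

end AuxLemmas

open MeasureTheory

set_option maxHeartbeats 1600000000 in
/-- for a regular Borel (complex) measure `μ` on a compact Hausdorff
space `X`, written via its polar decomposition `dμ = ḡ d|μ|` with `ν = |μ|` a finite
regular Borel positive measure and `|g| = 1` a.e., the absolute value of the
integration functional `φ_μ : f ↦ ∫ f g dν` on `C(X)` is integration against `ν`. -/
theorem stmt1 {X M : Type*} [TopologicalSpace X] [CompactSpace X] [T2Space X]
    [MeasurableSpace X] [BorelSpace X]
    [NormedRing M] [StarRing M] [CStarRing M]
    [NormedAlgebra ℂ M] [StarModule ℂ M] [CompleteSpace M]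
    (B : BidualSetup C(X, ℂ) M)
    (ν : Measure X) [IsFiniteMeasure ν] [ν.Regular]
    (g : X → ℂ) (hg : AEStronglyMeasurable g ν)
    (hg1 : ∀ᵐ x ∂ν, ‖g x‖ = 1)
    (φ : C(X, ℂ) →L[ℂ] ℂ)
    (hφ : ∀ f : C(X, ℂ), φ f = ∫ x, f x * g x ∂ν) :
    ∀ f : C(X, ℂ), B.absVal φ (B.ι f) = ∫ x, f x ∂ν := by
  obtain ⟨hv, hpos, hrep, hsupp⟩ := B.polar φ
  rcases isEmpty_or_nonempty X with hX | hX
  · intro f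
    have hf : f = 0 := by ext x; exact (IsEmpty.false x).elim
    subst hf
    rw [map_zero, map_zero, integral_of_isEmpty]
  set v : M := B.pIso φ with hvdef
  set ω : M →L[ℂ] ℂ := B.absVal φ with hωdef
  set c : ℝ := (ν Set.univ).toReal with hcdef
  clear_value v ω c
  have hc0 : 0 ≤ c := by rw [hcdef]; exact ENNReal.toReal_nonneg
  -- s = star v * v facts
  have hs_idem : (star v * v) * (star v * v) = star v * v := by
    have h1 : (star v * v) * (star v * v) = star v * (v * star v * v) := by noncomm_ring
    rw [h1, hv]
  have h3 : star (1 - star v * v) * (1 - star v * v) = 1 - star v * v := by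
    have hst : star ((1:M) - star v * v) = 1 - star v * v := by
      simp [star_sub, star_mul, star_star]
    rw [hst, sub_mul, one_mul, mul_sub, mul_one, hs_idem]
    abel
  have hzero : ω (1 - star v * v) = 0 := by
    have h1 : ((1:M) - star v * v) * (star v * v) = 0 := by
      rw [sub_mul, one_mul, hs_idem, sub_self]
    have h2 := (hsupp (1 - star v * v)).mpr h1
    rwa [h3] at h2
  have homega_s : ∀ ξ : M, ω (ξ * (star v * v)) = ω ξ := by
    intro ξ
    have hcs := cs_ineq hpos (star ξ) (1 - star v * v)
    rw [star_star, h3, hzero] at hcs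
    simp only [Complex.zero_re, mul_zero] at hcs
    have h0 : ω (ξ * (1 - star v * v)) = 0 := by
      have hge := norm_nonneg (ω (ξ * (1 - star v * v)))
      have hn : ‖ω (ξ * (1 - star v * v))‖ = 0 := by nlinarith [hcs]
      exact norm_eq_zero.mp hn
    have he : ξ * ((1:M) - star v * v) = ξ - ξ * (star v * v) := by rw [mul_sub, mul_one]
    rw [he, map_sub, sub_eq_zero] at h0
    exact h0.symm
  have hnv : ‖v‖ ≤ 1 := by
    have h1 : ‖star v * v‖ = ‖v‖ * ‖v‖ := CStarRing.norm_star_mul_self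
    have hst : star (star v * v) = star v * v := by simp [star_mul, star_star]
    have h2 : ‖star v * v‖ * ‖star v * v‖ = ‖star v * v‖ := by
      calc ‖star v * v‖ * ‖star v * v‖ = ‖star (star v * v) * (star v * v)‖ :=
            (CStarRing.norm_star_mul_self).symm
        _ = ‖(star v * v) * (star v * v)‖ := by rw [hst]
        _ = ‖star v * v‖ := by rw [hs_idem]
    have h3' : ‖star v * v‖ ≤ 1 := by nlinarith [norm_nonneg (star v * v)]
    nlinarith [norm_nonneg v, h1, h3']
  have hωb : ∀ ξ : M, ‖ω ξ‖ ≤ ‖φ‖ * ‖ξ‖ := by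
    intro ξ
    have h1 : ω ξ = B.hat φ (ξ * star v) := by
      rw [hrep (ξ * star v), mul_assoc, homega_s]
    rw [h1]
    calc ‖B.hat φ (ξ * star v)‖ ≤ ‖B.hat φ‖ * ‖ξ * star v‖ := (B.hat φ).le_opNorm _
      _ ≤ ‖φ‖ * (‖ξ‖ * ‖star v‖) := by
          rw [B.hat_norm]
          exact mul_le_mul_of_nonneg_left (norm_mul_le _ _) (norm_nonneg _)
      _ ≤ ‖φ‖ * ‖ξ‖ := by
          rw [norm_star]
          exact mul_le_mul_of_nonneg_left (mul_le_of_le_one_right (norm_nonneg ξ) hnv)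
            (norm_nonneg φ)
  have hφc : ‖φ‖ ≤ c := by
    refine ContinuousLinearMap.opNorm_le_bound φ hc0 ?_
    intro k
    rw [hφ k]
    calc ‖∫ x, k x * g x ∂ν‖ ≤ ∫ x, ‖k x * g x‖ ∂ν := norm_integral_le_integral_norm _
      _ = ∫ x, ‖k x‖ ∂ν := by
          apply integral_congr_ae
          filter_upwards [hg1] with x hx
          rw [norm_mul, hx, mul_one]
      _ ≤ ∫ _x, ‖k‖ ∂ν := by
          apply integral_mono (cont_integrable k ν).norm (integrable_const _)
          exact fun x => k.norm_coe_le_norm x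
      _ = c * ‖k‖ := by rw [integral_const]; rw [smul_eq_mul, hcdef]; rfl
  -- positivity of the two functionals
  have hΨpos : ∀ u : C(X,ℝ), (∀ x, 0 ≤ u x) → 0 ≤ ω (B.ι (cm u)) := by
    intro u hu
    have h := hpos (B.ι (cm (sq' u)))
    rw [← B.ι_star, ← B.ι_mul, cm_star, cm_sq_mul_self u hu] at h
    exact h
  have hΘpos : ∀ u : C(X,ℝ), (∀ x, 0 ≤ u x) → 0 ≤ ω (star v * B.ι (cm u) * v) := by
    intro u hu
    have h := hpos (B.ι (cm (sq' u)) * v)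
    have e : star (B.ι (cm (sq' u)) * v) * (B.ι (cm (sq' u)) * v)
        = star v * B.ι (cm u) * v := by
      rw [star_mul]
      have e1 : star (B.ι (cm (sq' u))) = B.ι (cm (sq' u)) := by rw [← B.ι_star, cm_star]
      rw [e1]
      have e2 : (star v * B.ι (cm (sq' u))) * (B.ι (cm (sq' u)) * v)
          = star v * (B.ι (cm (sq' u)) * B.ι (cm (sq' u))) * v := by noncomm_ring
      rw [e2, ← B.ι_mul, cm_sq_mul_self u hu]
    rwa [e] at h
  -- integrability of conj g
  have hgc : AEStronglyMeasurable (fun x => (starRingEnd ℂ) (g x)) ν :=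
    Complex.continuous_conj.comp_aestronglyMeasurable hg
  have hgcint : Integrable (fun x => (starRingEnd ℂ) (g x)) ν := by
    refine Integrable.mono' (integrable_const 1) hgc ?_
    filter_upwards [hg1] with x hx
    simp [hx]
  -- the main quadratic estimate
  have hmain : ∀ u : C(X,ℝ), (∀ x, 0 ≤ u x) → (∀ x, u x ≤ 1) →
      (∫ x, u x ∂ν)^2 ≤ (ω (B.ι (cm u))).re * (ω (star v * B.ι (cm u) * v)).re := by
    intro u hu0 hu1
    set a : ℝ := ∫ x, u x ∂ν with hadef
    set p : ℝ := (ω (B.ι (cm u))).re with hpdef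
    set t : ℝ := (ω (star v * B.ι (cm u) * v)).re with htdef
    have ha0 : 0 ≤ a := integral_nonneg (fun x => hu0 x)
    have hΨu := hΨpos u hu0
    rw [Complex.le_def] at hΨu
    have hp0 : 0 ≤ p := by simpa [hpdef] using hΨu.1
    have hΘu := hΘpos u hu0
    rw [Complex.le_def] at hΘu
    have ht0 : 0 ≤ t := by simpa [htdef] using hΘu.1
    clear_value a
    -- Step 1: Cauchy-Schwarz estimate
    have hkey1 : ∀ hh : C(X,ℂ), (∀ x, ‖hh x‖ ≤ 1) → ‖φ (cm u * hh)‖^2 ≤ p * t := by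
      intro hh hhb
      set K : M := B.ι (cm (sq' u)) with hKdef
      have hKs : star K = K := by rw [hKdef, ← B.ι_star, cm_star]
      have hKK : K * K = B.ι (cm u) := by
        rw [hKdef, ← B.ι_mul, cm_sq_mul_self u hu0]
      have hφval : φ (cm u * hh) = ω (star K * (K * B.ι hh * v)) := by
        rw [← B.hat_ext φ (cm u * hh), hrep (B.ι (cm u * hh)), B.ι_mul, ← hKK, hKs]
        congr 1
        noncomm_ring
      -- the weight u2 = u * |hh|^2
      set u2 : C(X,ℝ) := ⟨fun x => u x * ‖hh x‖^2,
        u.continuous.mul ((hh.continuous.norm).pow 2)⟩ with hu2def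
      have hsecond : star (K * B.ι hh * v) * (K * B.ι hh * v)
          = star v * B.ι (cm u2) * v := by
        have e0 : star (K * B.ι hh * v) = star v * (star (B.ι hh) * K) := by
          rw [star_mul, star_mul, hKs]
        rw [e0]
        have e1 : (star v * (star (B.ι hh) * K)) * (K * B.ι hh * v)
            = star v * (star (B.ι hh) * (K * K) * B.ι hh) * v := by noncomm_ring
        rw [e1, hKK, ← B.ι_star, ← B.ι_mul, ← B.ι_mul]
        have efin : star hh * cm u * hh = cm u2 := by
          ext x
          simp only [ContinuousMap.mul_apply, ContinuousMap.star_apply, cm_apply, hu2def,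
            ContinuousMap.coe_mk]
          calc star (hh x) * (u x : ℂ) * hh x = (u x : ℂ) * (hh x * star (hh x)) := by ring
            _ = (u x : ℂ) * ((‖hh x‖^2 : ℝ) : ℂ) := by
                rw [Complex.star_def, Complex.mul_conj]
                norm_cast
                rw [Complex.normSq_eq_norm_sq]
            _ = ((u x * ‖hh x‖^2 : ℝ) : ℂ) := by push_cast; ring
        rw [efin]
      have hcs := cs_ineq hpos K (K * B.ι hh * v)
      have hfac : star K * K = B.ι (cm u) := by rw [hKs, hKK]
      rw [hsecond, hfac] at hcs
      rw [hφval]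
      -- second factor bounded by t
      have hsplit : ω (star v * B.ι (cm u) * v)
          = ω (star v * B.ι (cm u2) * v) + ω (star v * B.ι (cm (u - u2)) * v) := by
        have e : cm u = cm u2 + cm (u - u2) := by
          ext x; simp [cm]
        rw [e, map_add, mul_add, add_mul, map_add]
      have hpos2 := hΘpos (u - u2) (fun x => by
        simp only [ContinuousMap.sub_apply, hu2def, ContinuousMap.coe_mk]
        have h1 : ‖hh x‖^2 ≤ 1 := by nlinarith [hhb x, norm_nonneg (hh x)]
        nlinarith [hu0 x, h1])
      rw [Complex.le_def] at hpos2
      have h2le : (ω (star v * B.ι (cm u2) * v)).re ≤ t := by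
        have := congrArg Complex.re hsplit
        simp only [Complex.add_re] at this
        have h4 : 0 ≤ (ω (star v * B.ι (cm (u - u2)) * v)).re := by simpa using hpos2.1
        rw [htdef]
        linarith [this, h4]
      have hpos3 := hΘpos u2 (fun x => by
        simp only [hu2def, ContinuousMap.coe_mk]
        exact mul_nonneg (hu0 x) (by positivity))
      rw [Complex.le_def] at hpos3
      have h5 : 0 ≤ (ω (star v * B.ι (cm u2) * v)).re := by simpa using hpos3.1
      calc ‖ω (star K * (K * B.ι hh * v))‖^2
          ≤ p * (ω (star v * B.ι (cm u2) * v)).re := hcs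
        _ ≤ p * t := mul_le_mul_of_nonneg_left h2le hp0
    -- Step 2: approximation
    have hstep : ∀ ε : ℝ, 0 < ε → a ≤ Real.sqrt (p*t) + ε := by
      intro ε hε
      obtain ⟨hh, hhb, hhL1⟩ := approx_conj ν g hg hg1 hε
      have h1 := hkey1 hh hhb
      have h2 : ‖((a:ℝ):ℂ) - φ (cm u * hh)‖ ≤ ε := by
        have hφv : φ (cm u * hh) = ∫ x, ((u x : ℂ) * hh x) * g x ∂ν := by
          rw [hφ]
          rfl
        have haC : ((a:ℝ):ℂ) = ∫ x, ((u x : ℂ)) ∂ν := by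
          rw [hadef]; exact (integral_ofReal).symm
        have hint1 : Integrable (fun x => (u x : ℂ)) ν := cont_integrable (cm u) ν
        have hasm2 : AEStronglyMeasurable (fun x => ((u x:ℂ) * hh x) * g x) ν :=
          ((cm u * hh : C(X,ℂ)).continuous.aestronglyMeasurable).mul hg
        have hint2 : Integrable (fun x => ((u x:ℂ) * hh x) * g x) ν := by
          refine Integrable.mono' (integrable_const 1) hasm2 ?_
          filter_upwards [hg1] with x hx
          rw [norm_mul, norm_mul, hx, mul_one, Complex.norm_real, Real.norm_eq_abs,
            abs_of_nonneg (hu0 x)]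
          nlinarith [hu0 x, hu1 x, hhb x, norm_nonneg (hh x)]
        rw [hφv, haC, ← integral_sub hint1 hint2]
        have hcongr : ∀ᵐ x ∂ν, (u x:ℂ) - (u x:ℂ) * hh x * g x
            = (u x:ℂ) * ((starRingEnd ℂ) (g x) - hh x) * g x := by
          filter_upwards [hg1] with x hx
          have hgg : (starRingEnd ℂ) (g x) * g x = 1 := by
            rw [mul_comm, Complex.mul_conj]
            norm_cast
            rw [Complex.normSq_eq_norm_sq, hx]
            norm_num
          have e : (u x:ℂ) * ((starRingEnd ℂ) (g x) - hh x) * g x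
              = (u x:ℂ) * ((starRingEnd ℂ) (g x) * g x) - (u x:ℂ) * hh x * g x := by ring
          rw [e, hgg, mul_one]
        rw [integral_congr_ae hcongr]
        have int3 : Integrable (fun x => (u x:ℂ) * ((starRingEnd ℂ) (g x) - hh x) * g x) ν := by
          refine Integrable.mono' (integrable_const 2) ?_ ?_
          · exact (((cm u : C(X,ℂ)).continuous.aestronglyMeasurable).mul
              (hgc.sub (hh.continuous.aestronglyMeasurable))).mul hg
          · filter_upwards [hg1] with x hx
            rw [norm_mul, norm_mul, hx, mul_one, Complex.norm_real, Real.norm_eq_abs,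
              abs_of_nonneg (hu0 x)]
            have hb1 : ‖(starRingEnd ℂ) (g x) - hh x‖ ≤ 2 := by
              calc ‖(starRingEnd ℂ) (g x) - hh x‖ ≤ ‖(starRingEnd ℂ) (g x)‖ + ‖hh x‖ :=
                    norm_sub_le _ _
                _ ≤ 2 := by
                    have : ‖(starRingEnd ℂ) (g x)‖ = 1 := by simp [hx]
                    linarith [hhb x, this]
            nlinarith [hu0 x, hu1 x, hb1, norm_nonneg ((starRingEnd ℂ) (g x) - hh x)]
        have int4 : Integrable (fun x => ‖hh x - (starRingEnd ℂ) (g x)‖) ν :=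
          ((cont_integrable hh ν).sub hgcint).norm
        calc ‖∫ x, (u x:ℂ) * ((starRingEnd ℂ) (g x) - hh x) * g x ∂ν‖
            ≤ ∫ x, ‖(u x:ℂ) * ((starRingEnd ℂ) (g x) - hh x) * g x‖ ∂ν :=
              norm_integral_le_integral_norm _
          _ ≤ ∫ x, ‖hh x - (starRingEnd ℂ) (g x)‖ ∂ν := by
              apply integral_mono_ae int3.norm int4
              filter_upwards [hg1] with x hx
              rw [norm_mul, norm_mul, hx, mul_one, Complex.norm_real, Real.norm_eq_abs,
                abs_of_nonneg (hu0 x), norm_sub_rev]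
              nlinarith [hu0 x, hu1 x, norm_nonneg (hh x - (starRingEnd ℂ) (g x))]
          _ ≤ ε := hhL1
      have h3 : a = ‖((a:ℝ):ℂ)‖ := by
        rw [Complex.norm_real, Real.norm_eq_abs, abs_of_nonneg ha0]
      have h4 : ‖((a:ℝ):ℂ)‖ ≤ ‖φ (cm u * hh)‖ + ε := by
        have h6 := norm_sub_norm_le ((a:ℝ):ℂ) (φ (cm u * hh))
        linarith [h2, h6]
      have h5 : ‖φ (cm u * hh)‖ ≤ Real.sqrt (p * t) := by
        rw [Real.le_sqrt (norm_nonneg _) (mul_nonneg hp0 ht0)]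
        exact h1
      linarith [h3.le, h4, h5]
    have ha_sqrt : a ≤ Real.sqrt (p * t) :=
      le_of_forall_pos_le_add hstep
    calc a^2 ≤ Real.sqrt (p*t)^2 := by nlinarith [ha0, ha_sqrt, Real.sqrt_nonneg (p*t)]
      _ = p * t := Real.sq_sqrt (mul_nonneg hp0 ht0)
  -- norm of ω at 1 and related quantities
  have he_z := hpos 1
  rw [star_one, one_mul] at he_z
  rw [Complex.le_def] at he_z
  have he0 : 0 ≤ (ω 1).re := by simpa using he_z.1
  have hec : (ω 1).re ≤ c := by
    have h1 : (ω 1).re ≤ ‖ω 1‖ := by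
      exact Complex.re_le_norm _
    have h2 : ‖ω 1‖ ≤ ‖φ‖ * ‖(1:M)‖ := hωb 1
    have h3' : ‖(1:M)‖ = 1 := by
      rw [← B.ι_one, B.ι_isom]
      exact norm_one
    rw [h3', mul_one] at h2
    linarith [h1, h2, hφc]
  have hωsvv : ω (star v * v) = ω 1 := by
    have := homega_s 1
    rwa [one_mul] at this
  have hint1C : ∀ u : C(X,ℝ), Integrable (fun x => u x) ν := fun u => cont_integrable u ν
  have hconst : ∫ _x : X, (1:ℝ) ∂ν = c := by
    rw [integral_const, smul_eq_mul, mul_one, hcdef]; rfl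
  -- the equality on [0,1]-valued functions
  have key : ∀ u : C(X,ℝ), (∀ x, 0 ≤ u x) → (∀ x, u x ≤ 1) →
      ω (B.ι (cm u)) = ((∫ x, u x ∂ν : ℝ) : ℂ) := by
    intro u hu0 hu1
    set a : ℝ := ∫ x, u x ∂ν with hadef
    set p : ℝ := (ω (B.ι (cm u))).re with hpdef
    set t : ℝ := (ω (star v * B.ι (cm u) * v)).re with htdef
    set e : ℝ := (ω 1).re with hedef
    have ha0 : 0 ≤ a := integral_nonneg (fun x => hu0 x)
    have hac : a ≤ c := by
      rw [hadef, ← hconst]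
      exact integral_mono (hint1C u) (integrable_const 1) (fun x => hu1 x)
    have hΨu := hΨpos u hu0
    rw [Complex.le_def] at hΨu
    have hp0 : 0 ≤ p := by simpa [hpdef] using hΨu.1
    have hpim : (ω (B.ι (cm u))).im = 0 := by simpa using hΨu.2.symm
    have hΘu := hΘpos u hu0
    rw [Complex.le_def] at hΘu
    have ht0 : 0 ≤ t := by simpa [htdef] using hΘu.1
    -- complement function
    have hcompl0 : ∀ x, 0 ≤ ((1:C(X,ℝ)) - u) x := fun x => by
      simp only [ContinuousMap.sub_apply, ContinuousMap.one_apply]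
      linarith [hu1 x]
    have hcompl1 : ∀ x, ((1:C(X,ℝ)) - u) x ≤ 1 := fun x => by
      simp only [ContinuousMap.sub_apply, ContinuousMap.one_apply]
      linarith [hu0 x]
    -- linear relations
    have hΨsub : ω (B.ι (cm ((1:C(X,ℝ)) - u))) = ω 1 - ω (B.ι (cm u)) := by
      rw [cm_one_sub, map_sub, map_sub, B.ι_one]
    have hΘsub : ω (star v * B.ι (cm ((1:C(X,ℝ)) - u)) * v) = ω 1 - ω (star v * B.ι (cm u) * v) := by
      rw [cm_one_sub, map_sub, B.ι_one, mul_sub, sub_mul, mul_one, map_sub, hωsvv]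
    have hIsub : ∫ x, ((1:C(X,ℝ)) - u) x ∂ν = c - a := by
      have : (fun x => ((1:C(X,ℝ)) - u) x) = fun x => (1:ℝ) - u x := by
        funext x; simp
      rw [this, integral_sub (integrable_const 1) (hint1C u), hconst, hadef]
    -- bounds p ≤ e, t ≤ e
    have hΨc := hΨpos ((1:C(X,ℝ)) - u) hcompl0
    rw [hΨsub, Complex.le_def] at hΨc
    have hpe : p ≤ e := by
      have := hΨc.1
      simp only [Complex.sub_re, Complex.zero_re] at this
      rw [hpdef, hedef]; linarith
    have hΘc := hΘpos ((1:C(X,ℝ)) - u) hcompl0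
    rw [hΘsub, Complex.le_def] at hΘc
    have hte : t ≤ e := by
      have := hΘc.1
      simp only [Complex.sub_re, Complex.zero_re] at this
      rw [htdef, hedef]; linarith
    -- the two quadratic inequalities
    have h1 := hmain u hu0 hu1
    rw [← hadef, ← hpdef, ← htdef] at h1
    have h2 := hmain ((1:C(X,ℝ)) - u) hcompl0 hcompl1
    rw [hIsub, hΨsub, hΘsub] at h2
    have h2' : (c - a)^2 ≤ (e - p) * (e - t) := by
      have e1 : (ω 1 - ω (B.ι (cm u))).re = e - p := by
        simp only [Complex.sub_re, hedef, hpdef]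
      have e2 : (ω 1 - ω (star v * B.ι (cm u) * v)).re = e - t := by
        simp only [Complex.sub_re, hedef, htdef]
      rwa [e1, e2] at h2
    have h2c : (c - a)^2 ≤ (c - p) * (c - t) := by
      have hf1 : e - p ≤ c - p := by linarith [hec]
      have hf2 : e - t ≤ c - t := by linarith [hec]
      have hf3 : 0 ≤ e - t := by linarith [hte]
      have hf4 : 0 ≤ c - p := by linarith [hpe, hec]
      calc (c - a)^2 ≤ (e - p) * (e - t) := h2'
        _ ≤ (c - p) * (c - t) := mul_le_mul hf1 hf2 hf3 hf4
    -- numeric conclusion: p = a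
    clear_value a p t e
    have hpc : p ≤ c := by linarith [hpe, hec]
    have htc : t ≤ c := by linarith [hte, hec]
    have hS : p + t ≤ 2*a := by
      rcases lt_or_ge a c with hac' | hac''
      · have hXY : (p + t - 2*a) * (4*c - (p+t) - 2*a) ≤ 0 := by
          nlinarith [h2c, sq_nonneg (p - t), h1]
        have hY : 0 < 4*c - (p+t) - 2*a := by linarith [hpc, htc, hac']
        nlinarith [hXY, hY]
      · have haeq : a = c := le_antisymm hac hac''
        linarith [hpc, htc]
    have hpeq : p = a := by
      have hsq : (a - p)^2 ≤ 0 := by nlinarith [h1, hS, hp0]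
      have h7 := sq_nonneg (a - p)
      have h8 : (a - p)^2 = 0 := le_antisymm hsq h7
      have h9 := pow_eq_zero_iff (n := 2) (by norm_num) |>.mp h8
      linarith [sub_eq_zero.mp h9]
    rw [Complex.ext_iff]
    constructor
    · rw [← hpdef]
      rw [hpeq, Complex.ofReal_re]
    · rw [hpim, Complex.ofReal_im]
  -- scale to all nonneg functions
  have key' : ∀ u : C(X,ℝ), (∀ x, 0 ≤ u x) → ω (B.ι (cm u)) = ((∫ x, u x ∂ν : ℝ) : ℂ) := by
    intro u hu
    set r : ℝ := ‖u‖ + 1 with hr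
    have hr0 : 0 < r := by positivity
    set u' : C(X,ℝ) := r⁻¹ • u with hu'
    have hu'app : ∀ x, u' x = r⁻¹ * u x := fun x => rfl
    have hu'0 : ∀ x, 0 ≤ u' x := fun x => by
      rw [hu'app]
      exact mul_nonneg (by positivity) (hu x)
    have hu'1 : ∀ x, u' x ≤ 1 := fun x => by
      rw [hu'app]
      have h1 : u x ≤ r := by
        have h2 : u x ≤ ‖u‖ := le_trans (le_abs_self _)
          (by rw [← Real.norm_eq_abs]; exact u.norm_coe_le_norm x)
        linarith
      rw [inv_mul_le_iff₀ hr0, mul_one]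
      exact h1
    have hcm : cm u = (r:ℂ) • cm u' := by
      ext x
      simp only [cm_apply, ContinuousMap.smul_apply, smul_eq_mul, hu'app]
      push_cast
      field_simp
    rw [hcm, _root_.map_smul, _root_.map_smul, key u' hu'0 hu'1]
    have hIeq : ∫ x, u x ∂ν = r * ∫ x, u' x ∂ν := by
      have e1 : (fun x => u' x) = fun x => r⁻¹ * u x := funext hu'app
      rw [e1, integral_const_mul]
      field_simp
    rw [hIeq, smul_eq_mul]
    push_cast
    ring
  -- final assembly for a general complex f
  intro f
  set u1 : C(X,ℝ) := ⟨fun x => max (f x).re 0,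
    (Complex.continuous_re.comp f.continuous).max continuous_const⟩ with hu1def
  set u2 : C(X,ℝ) := ⟨fun x => max (-(f x).re) 0,
    ((Complex.continuous_re.comp f.continuous).neg).max continuous_const⟩ with hu2def
  set u3 : C(X,ℝ) := ⟨fun x => max (f x).im 0,
    (Complex.continuous_im.comp f.continuous).max continuous_const⟩ with hu3def
  set u4 : C(X,ℝ) := ⟨fun x => max (-(f x).im) 0,
    ((Complex.continuous_im.comp f.continuous).neg).max continuous_const⟩ with hu4def
  have hmax : ∀ b : ℝ, max b 0 - max (-b) 0 = b := by
    intro b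
    rcases le_total b 0 with h | h
    · rw [max_eq_right h, max_eq_left (by linarith : (0:ℝ) ≤ -b)]
      ring
    · rw [max_eq_left h, max_eq_right (by linarith : -b ≤ (0:ℝ))]
      ring
  have hpt : ∀ x, f x = ((u1 x : ℂ) - u2 x) + Complex.I * ((u3 x:ℂ) - u4 x) := by
    intro x
    have h1 : (u1 x : ℝ) - u2 x = (f x).re := hmax (f x).re
    have h2 : (u3 x : ℝ) - u4 x = (f x).im := hmax (f x).im
    have : ((u1 x : ℂ) - u2 x) + Complex.I * ((u3 x:ℂ) - u4 x)
        = (((f x).re : ℂ)) + ((f x).im : ℂ) * Complex.I := by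
      rw [show ((u1 x : ℂ) - u2 x) = (((u1 x : ℝ) - u2 x : ℝ) : ℂ) by push_cast; ring,
        show ((u3 x : ℂ) - u4 x) = (((u3 x : ℝ) - u4 x : ℝ) : ℂ) by push_cast; ring, h1, h2]
      ring
    rw [this, Complex.re_add_im]
  have hdecomp : f = (cm u1 - cm u2) + Complex.I • (cm u3 - cm u4) := by
    ext x
    simp only [ContinuousMap.add_apply, ContinuousMap.sub_apply, ContinuousMap.smul_apply,
      cm_apply, smul_eq_mul]
    exact hpt x
  -- left-hand side
  have hL : ω (B.ι f) = (((∫ x, u1 x ∂ν : ℝ) : ℂ) - ((∫ x, u2 x ∂ν : ℝ) : ℂ))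
      + Complex.I * (((∫ x, u3 x ∂ν : ℝ) : ℂ) - ((∫ x, u4 x ∂ν : ℝ) : ℂ)) := by
    rw [hdecomp]
    simp only [map_add, map_sub, _root_.map_smul]
    rw [key' u1 (fun x => le_max_right _ _), key' u2 (fun x => le_max_right _ _),
      key' u3 (fun x => le_max_right _ _), key' u4 (fun x => le_max_right _ _)]
    rw [smul_eq_mul]
  rw [hL]
  have hint : ∀ w : C(X,ℝ), Integrable (fun x => (w x : ℂ)) ν :=
    fun w => cont_integrable (cm w) ν
  have hR : ∫ x, f x ∂ν = ∫ x, (((u1 x:ℂ) - u2 x) + Complex.I * ((u3 x:ℂ) - u4 x)) ∂ν := by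
    apply integral_congr_ae
    filter_upwards with x
    exact hpt x
  have int12 : Integrable (fun x => (u1 x:ℂ) - u2 x) ν := (hint u1).sub (hint u2)
  have int34 : Integrable (fun x => Complex.I * ((u3 x:ℂ) - u4 x)) ν :=
    ((hint u3).sub (hint u4)).const_mul _
  have int1 : Integrable (fun x => (u1 x:ℂ)) ν := hint u1
  have int2 : Integrable (fun x => (u2 x:ℂ)) ν := hint u2
  have int3 : Integrable (fun x => (u3 x:ℂ)) ν := hint u3
  have int4 : Integrable (fun x => (u4 x:ℂ)) ν := hint u4
  have hcast : ∀ w : C(X,ℝ), ∫ x, ((w x : ℝ) : ℂ) ∂ν = ((∫ x, w x ∂ν : ℝ) : ℂ) :=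
    fun w => integral_ofReal
  rw [hR, integral_add int12 int34, integral_sub int1 int2, integral_const_mul,
    integral_sub int3 int4, hcast u1, hcast u2, hcast u3, hcast u4]
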